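/- Let V be the vertex poset of a finite arborescence with thresholds T_v, state space Ω, and for each vertex v let τ_v : Ω → Ω be the landslide toppling operator (which sets t_v to 0 and deposits the t_v grains one by one at the first non-full vertices along the path from v to the root, overflow exiting at the root). Then each τ_v is decreasing for the dominance order: τ_v(t) ⊴ t for all t ∈ Ω. -/

import Mathlib

/-- Dominance order on sand configurations: compare the sums over principal upsets. -/
def domRel {V : Type*} [Fintype V] [PartialOrder V]
    [DecidableRel ((· ≤ ·) : V → V → Prop)] (t t' : V → ℕ) : Prop :=
  ∀ v : V, ∑ w ∈ Finset.univ.filter (fun w => v ≤ w), t w ≤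
    ∑ w ∈ Finset.univ.filter (fun w => v ≤ w), t' w

/-- Specification of the single-grain topple operator θ_v: on a valid configuration it
does nothing if `t v = 0`; otherwise it removes one grain at `v` and deposits it at the
first (largest) vertex strictly below `v` on the path to the root that is not at its
threshold, the grain exiting if all vertices below `v` are full. -/
def stepSpec {V : Type*} [PartialOrder V] [DecidableEq V] (T : V → ℕ) (v : V)
    (θ : (V → ℕ) → (V → ℕ)) : Prop :=
  ∀ t : V → ℕ, (∀ w, t w ≤ T w) →
    (t v = 0 → θ t = t) ∧
    (0 < t v →
      ((∀ w, w < v → t w = T w) → θ t = Function.update t v (t v - 1)) ∧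
      (∀ w, w < v → t w < T w → (∀ u, w < u → u < v → t u = T u) →
        θ t = Function.update (Function.update t v (t v - 1)) w (t w + 1)))

lemma key {V : Type*} [Fintype V] [PartialOrder V] [DecidableEq V]
    [DecidableRel ((· ≤ ·) : V → V → Prop)]
    (hchain : ∀ v : V, IsChain (· ≤ ·) {w | w ≤ v})
    (T : V → ℕ) (v : V)
    (θ : (V → ℕ) → (V → ℕ)) (hθ : stepSpec T v θ)
    (t : V → ℕ) (ht : ∀ w, t w ≤ T w) :
    (∀ w, θ t w ≤ T w) ∧ domRel (θ t) t := by
  classical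
  obtain ⟨h0, hpos⟩ := hθ t ht
  rcases Nat.eq_zero_or_pos (t v) with hz | hp
  · rw [h0 hz]; exact ⟨ht, fun x => le_refl _⟩
  obtain ⟨hfull, hdep⟩ := hpos hp
  set S : Finset V := Finset.univ.filter (fun w => w < v ∧ t w < T w) with hS
  rcases S.eq_empty_or_nonempty with hSe | hSne
  · -- all below v are full
    have hall : ∀ w, w < v → t w = T w := by
      intro w hw
      by_contra hne
      have : w ∈ S := by
        simp only [hS, Finset.mem_filter, Finset.mem_univ, true_and]
        exact ⟨hw, lt_of_le_of_ne (ht w) hne⟩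
      simp [hSe] at this
    rw [hfull hall]
    constructor
    · intro w
      rcases eq_or_ne w v with rfl | hne
      · simp only [Function.update_self]
        have := ht w; omega
      · simp [Function.update_of_ne hne]; exact ht w
    · intro x
      by_cases hx : v ∈ Finset.univ.filter (fun w => x ≤ w)
      · rw [Finset.sum_update_of_mem hx, Finset.sdiff_singleton_eq_erase,
          ← Finset.add_sum_erase _ t hx]
        omega
      · refine le_of_eq (Finset.sum_congr rfl fun w hw => ?_)
        have : w ≠ v := fun h => hx (h ▸ hw)
        simp [Function.update_of_ne this]
  · -- there is a non-full vertex below v; take a maximal one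
    obtain ⟨w, hwS, hwmax⟩ := S.exists_maximal hSne
    simp only [hS, Finset.mem_filter, Finset.mem_univ, true_and] at hwS
    obtain ⟨hwv, hwT⟩ := hwS
    have hbetween : ∀ u, w < u → u < v → t u = T u := by
      intro u hwu huv
      by_contra hne
      have huS : u ∈ S := by
        simp only [hS, Finset.mem_filter, Finset.mem_univ, true_and]
        exact ⟨huv, lt_of_le_of_ne (ht u) hne⟩
      exact absurd (hwmax huS hwu.le) (lt_iff_le_not_ge.1 hwu).2
    rw [hdep w hwv hwT hbetween]
    have hwne : w ≠ v := ne_of_lt hwv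
    constructor
    · intro x
      rcases eq_or_ne x w with rfl | hxw
      · simp only [Function.update_self]
        have := hwT; omega
      · rw [Function.update_of_ne hxw]
        rcases eq_or_ne x v with rfl | hxv
        · simp only [Function.update_self]
          have := ht x; omega
        · rw [Function.update_of_ne hxv]; exact ht x
    · intro x
      set s := Finset.univ.filter (fun u => x ≤ u) with hs
      by_cases hvs : v ∈ s
      · by_cases hws : w ∈ s
        · rw [Finset.sum_update_of_mem hws, Finset.sdiff_singleton_eq_erase]
          have hvs' : v ∈ s.erase w := Finset.mem_erase.2 ⟨(Ne.symm hwne), hvs⟩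
          rw [Finset.sum_update_of_mem hvs', Finset.sdiff_singleton_eq_erase]
          have h1 := (Finset.add_sum_erase _ t hws).symm
          have h2 := (Finset.add_sum_erase _ t hvs').symm
          omega
        · have hupd : ∀ u ∈ s, Function.update (Function.update t v (t v - 1)) w (t w + 1) u
              = Function.update t v (t v - 1) u := by
            intro u hu
            have : u ≠ w := fun h => hws (h ▸ hu)
            simp [Function.update_of_ne this]
          rw [Finset.sum_congr rfl hupd, Finset.sum_update_of_mem hvs,
            Finset.sdiff_singleton_eq_erase, ← Finset.add_sum_erase _ t hvs]
          omega
      · refine le_of_eq (Finset.sum_congr rfl fun u hu => ?_)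
        have huv : u ≠ v := fun h => hvs (h ▸ hu)
        have huw : u ≠ w := by
          rintro rfl
          apply hvs
          simp only [hs, Finset.mem_filter, Finset.mem_univ, true_and] at hu ⊢
          exact hu.trans hwv.le
        simp [Function.update_of_ne huv, Function.update_of_ne huw]

/-- the landslide topple operator τ_v = θ_v^{T_v} is decreasing for the
dominance order: τ_v(t) ⊴ t. -/
theorem stmt8 (V : Type*) [Fintype V] [PartialOrder V] [DecidableEq V]
    [DecidableRel ((· ≤ ·) : V → V → Prop)]
    (hroot : ∃ r : V, ∀ v, r ≤ v)
    (hchain : ∀ v : V, IsChain (· ≤ ·) {w | w ≤ v})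
    (T : V → ℕ) (hT : ∀ v, 1 ≤ T v) (v : V)
    (θ : (V → ℕ) → (V → ℕ)) (hθ : stepSpec T v θ)
    (t : V → ℕ) (ht : ∀ w, t w ≤ T w) :
    domRel (θ^[T v] t) t := by
  suffices h : ∀ n, (∀ w, θ^[n] t w ≤ T w) ∧ domRel (θ^[n] t) t from (h (T v)).2
  intro n
  induction n with
  | zero => exact ⟨ht, fun x => le_refl _⟩
  | succ n ih =>
    obtain ⟨hval, hdom⟩ := ih
    obtain ⟨hval', hdom'⟩ := key hchain T v θ hθ _ hval
    rw [Function.iterate_succ_apply']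
    exact ⟨hval', fun x => (hdom' x).trans (hdom x)⟩
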